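/- Let $\mu, \alpha, w > 0$ and $k \ge 1$ an integer. Let $L$ be a Gamma$(k, \alpha)$ random variable (density $\frac{\alpha}{\Gamma(k)}(\alpha l)^{k-1}e^{-\alpha l}$ on $l \ge 0$), and independently let $Y = U + X$ where $U \sim \mathrm{Uniform}(-w,0)$ and $X \sim \mathrm{Exp}(\mu)$ are independent. Then $\Pr[Y \le L] = 1 - \frac{1 - e^{-\mu w}}{\mu w}\left(\frac{\alpha}{\alpha+\mu}\right)^k$. -/

import Mathlib

open MeasureTheory ProbabilityTheory Real

lemma my_expMeasure_Iic {μ t : ℝ} (hμ : 0 < μ) :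
    expMeasure μ (Set.Iic t) = ENNReal.ofReal (if 0 ≤ t then 1 - exp (-(μ * t)) else 0) := by
  rw [expMeasure, gammaMeasure, withDensity_apply _ measurableSet_Iic]
  exact lintegral_exponentialPDF_eq_antiDeriv hμ t

lemma my_expMeasure_Ioi {μ t : ℝ} (hμ : 0 < μ) (ht : 0 ≤ t) :
    expMeasure μ (Set.Ioi t) = ENNReal.ofReal (exp (-(μ * t))) := by
  have hP := isProbabilityMeasure_expMeasure hμ
  have h1 : expMeasure μ (Set.Iic t) = ENNReal.ofReal (1 - exp (-(μ * t))) := by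
    rw [my_expMeasure_Iic hμ, if_pos ht]
  have h2 := measure_compl (μ := expMeasure μ) (measurableSet_Iic (a := t)) (measure_ne_top _ _)
  rw [Set.compl_Iic] at h2
  have hle : exp (-(μ * t)) ≤ 1 := exp_le_one_iff.2 (neg_nonpos.2 (mul_nonneg hμ.le ht))
  rw [h2, h1, measure_univ, ← ENNReal.ofReal_one,
    ← ENNReal.ofReal_sub _ (by linarith : (0:ℝ) ≤ 1 - exp (-(μ * t)))]
  norm_num

lemma my_gamma_exp {k : ℕ} (hk : 1 ≤ k) {α μ : ℝ} (hα : 0 < α) (hμ : 0 < μ) :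
    ∫⁻ l, ENNReal.ofReal (exp (-(μ * l))) ∂(gammaMeasure k α)
      = ENNReal.ofReal ((α / (α + μ)) ^ k) := by
  have hαμ : 0 < α + μ := by linarith
  have hkR : (0:ℝ) < (k:ℝ) := by exact_mod_cast Nat.lt_of_lt_of_le Nat.zero_lt_one hk
  have hmg : Measurable fun l : ℝ => ENNReal.ofReal (exp (-(μ * l))) :=
    (measurable_exp.comp ((measurable_id.const_mul μ).neg)).ennreal_ofReal
  have hmpdf : Measurable (gammaPDF (k:ℝ) α) := (measurable_gammaPDFReal _ _).ennreal_ofReal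
  rw [gammaMeasure, lintegral_withDensity_eq_lintegral_mul _ hmpdf hmg]
  have hpt : ∀ l : ℝ, (gammaPDF (k:ℝ) α * fun l => ENNReal.ofReal (exp (-(μ * l)))) l
      = ENNReal.ofReal ((α / (α + μ)) ^ (k:ℝ)) * gammaPDF (k:ℝ) (α + μ) l := by
    intro l
    rcases lt_or_ge l 0 with hl | hl
    · simp [gammaPDF_of_neg hl]
    · simp only [Pi.mul_apply, gammaPDF_of_nonneg hl]
      rw [← ENNReal.ofReal_mul (by positivity), ← ENNReal.ofReal_mul (by positivity)]
      congr 1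
      have hkey : α ^ (k:ℝ) = (α / (α + μ)) ^ (k:ℝ) * (α + μ) ^ (k:ℝ) := by
        rw [← Real.mul_rpow (by positivity) hαμ.le, div_mul_cancel₀ _ hαμ.ne']
      have hexp : exp (-(α * l)) * exp (-(μ * l)) = exp (-((α + μ) * l)) := by
        rw [← Real.exp_add]; ring_nf
      rw [hkey, ← hexp]
      ring
  have hm2 : Measurable (gammaPDF (k:ℝ) (α + μ)) := (measurable_gammaPDFReal _ _).ennreal_ofReal
  rw [lintegral_congr hpt, lintegral_const_mul _ hm2,
    lintegral_gammaPDF_eq_one hkR hαμ, mul_one, Real.rpow_natCast]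

lemma my_unif_exp {μ w : ℝ} (hμ : 0 < μ) (hw : 0 < w) :
    ∫⁻ u in Set.Ioo (-w) 0, ENNReal.ofReal (exp (μ * u))
      = ENNReal.ofReal ((1 - exp (-(μ * w))) / μ) := by
  have hcont : Continuous fun u : ℝ => exp (μ * u) :=
    (continuous_const.mul continuous_id).rexp
  have hint : IntegrableOn (fun u : ℝ => exp (μ * u)) (Set.Ioo (-w) 0) :=
    (hcont.integrableOn_Icc).mono_set Set.Ioo_subset_Icc_self
  rw [← ofReal_integral_eq_lintegral_ofReal hint (ae_of_all _ fun u => (exp_pos _).le)]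
  congr 1
  have hd : ∀ u ∈ Set.uIcc (-w) (0:ℝ), HasDerivAt (fun v => exp (μ * v) / μ) (exp (μ * u)) u := by
    intro u _
    have h1 : HasDerivAt (fun v : ℝ => μ * v) μ u := by
      simpa using (hasDerivAt_id u).const_mul μ
    have h2 := (h1.exp).div_const μ
    simpa [mul_div_cancel_right₀ _ hμ.ne'] using h2
  calc ∫ u in Set.Ioo (-w) 0, exp (μ * u)
      = ∫ u in Set.Ioc (-w) 0, exp (μ * u) := (integral_Ioc_eq_integral_Ioo).symm
    _ = ∫ u in (-w)..0, exp (μ * u) := (intervalIntegral.integral_of_le (by linarith)).symm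
    _ = exp (μ * 0) / μ - exp (μ * -w) / μ :=
        intervalIntegral.integral_eq_sub_of_hasDerivAt hd (hcont.intervalIntegrable _ _)
    _ = (1 - exp (-(μ * w))) / μ := by
        rw [mul_zero, exp_zero, show μ * -w = -(μ * w) by ring]; ring

theorem prob_Y_le_L
    {Ω : Type*} [MeasureSpace Ω] [IsProbabilityMeasure (ℙ : Measure Ω)]
    (μ α w : ℝ) (hμ : 0 < μ) (hα : 0 < α) (hw : 0 < w) (k : ℕ) (hk : 1 ≤ k)
    (L U X : Ω → ℝ) (hLm : Measurable L) (hUm : Measurable U) (hXm : Measurable X)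
    (hL : Measure.map L ℙ = gammaMeasure k α)
    (hU : pdf.IsUniform U (Set.Ioo (-w) 0) ℙ)
    (hX : Measure.map X ℙ = expMeasure μ)
    (hind : iIndepFun ![L, U, X] ℙ) :
    ℙ {ω | U ω + X ω ≤ L ω} =
      ENNReal.ofReal (1 - (1 - exp (-μ * w)) / (μ * w) * (α / (α + μ)) ^ k) := by
  have hkR : (0:ℝ) < (k:ℝ) := by exact_mod_cast Nat.lt_of_lt_of_le Nat.zero_lt_one hk
  have hαμ : 0 < α + μ := by linarith
  have hPG : IsProbabilityMeasure (gammaMeasure (k:ℝ) α) := isProbabilityMeasure_gammaMeasure hkR hα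
  have hPE : IsProbabilityMeasure (expMeasure μ) := isProbabilityMeasure_expMeasure hμ
  set νU : Measure ℝ := (ENNReal.ofReal w)⁻¹ • volume.restrict (Set.Ioo (-w) 0) with hνU
  have hmU : Measure.map U ℙ = νU := by
    rw [hU, ProbabilityTheory.cond, Real.volume_Ioo, hνU]
    norm_num
  have hPU : IsProbabilityMeasure νU := by
    rw [← hmU]; exact Measure.isProbabilityMeasure_map hUm.aemeasurable
  have hfm : ∀ i, Measurable (![L, U, X] i) := by
    intro i; fin_cases i
    · exact hLm
    · exact hUm
    · exact hXm
  have hUL : IndepFun U L ℙ := hind.indepFun (show (1 : Fin 3) ≠ 0 by decide)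
  have hPair : IndepFun (fun ω => (U ω, L ω)) X ℙ := by
    have h := hind.indepFun_prodMk hfm 1 0 2 (by decide) (by decide)
    simpa [Matrix.cons_val_zero, Matrix.cons_val_one, Matrix.head_cons] using h
  have hmapUL : Measure.map (fun ω => (U ω, L ω)) ℙ = νU.prod (gammaMeasure k α) := by
    rw [(indepFun_iff_map_prod_eq_prod_map_map hUm.aemeasurable hLm.aemeasurable).mp hUL,
      hmU, hL]
  have hTm : Measurable fun ω => ((U ω, L ω), X ω) := (hUm.prodMk hLm).prodMk hXm
  have hmapT : Measure.map (fun ω => ((U ω, L ω), X ω)) ℙ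
      = (νU.prod (gammaMeasure k α)).prod (expMeasure μ) := by
    rw [(indepFun_iff_map_prod_eq_prod_map_map (hUm.prodMk hLm).aemeasurable
      hXm.aemeasurable).mp hPair, hmapUL, hX]
  have hS : MeasurableSet {p : (ℝ × ℝ) × ℝ | p.1.2 < p.1.1 + p.2} :=
    measurableSet_lt measurable_fst.snd (measurable_fst.fst.add measurable_snd)
  have hA : MeasurableSet {ω | U ω + X ω ≤ L ω} := measurableSet_le (hUm.add hXm) hLm
  have hcompl : {ω | U ω + X ω ≤ L ω}ᶜ
      = (fun ω => ((U ω, L ω), X ω)) ⁻¹' {p : (ℝ × ℝ) × ℝ | p.1.2 < p.1.1 + p.2} := by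
    ext ω; simp [not_le]
  have hexple : exp (-(μ * w)) ≤ 1 :=
    exp_le_one_iff.2 (neg_nonpos.2 (mul_nonneg hμ.le hw.le))
  have hq0 : 0 ≤ (1 - exp (-(μ * w))) / (μ * w) * (α / (α + μ)) ^ k :=
    mul_nonneg (div_nonneg (by linarith) (by positivity)) (by positivity)
  have hsec : ∀ u l : ℝ,
      (Prod.mk (u, l) ⁻¹' {p : (ℝ × ℝ) × ℝ | p.1.2 < p.1.1 + p.2}) = Set.Ioi (l - u) := by
    intro u l; ext x
    simp only [Set.mem_preimage, Set.mem_setOf_eq, Set.mem_Ioi]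
    constructor <;> intro <;> linarith
  have haeL : ∀ᵐ l ∂(gammaMeasure (k:ℝ) α), 0 ≤ l := by
    rw [ae_iff]
    have h0 : {l : ℝ | ¬ 0 ≤ l} = Set.Iio 0 := by ext l; simp [not_le]
    rw [h0, gammaMeasure, withDensity_apply _ measurableSet_Iio]
    exact lintegral_gammaPDF_of_nonpos le_rfl
  have hmg : Measurable fun l : ℝ => ENNReal.ofReal (exp (-(μ * l))) :=
    (measurable_exp.comp (measurable_id.const_mul μ).neg).ennreal_ofReal
  have hinner : ∀ u ∈ Set.Ioo (-w) (0:ℝ),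
      (∫⁻ l, expMeasure μ
          (Prod.mk (u, l) ⁻¹' {p : (ℝ × ℝ) × ℝ | p.1.2 < p.1.1 + p.2}) ∂gammaMeasure k α)
        = ENNReal.ofReal (exp (μ * u)) * ENNReal.ofReal ((α / (α + μ)) ^ k) := by
    intro u hu
    have hcg : ∀ᵐ l ∂(gammaMeasure (k:ℝ) α),
        expMeasure μ (Prod.mk (u, l) ⁻¹' {p : (ℝ × ℝ) × ℝ | p.1.2 < p.1.1 + p.2})
          = ENNReal.ofReal (exp (μ * u)) * ENNReal.ofReal (exp (-(μ * l))) := by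
      filter_upwards [haeL] with l hl
      rw [hsec u l, my_expMeasure_Ioi hμ (by have := hu.2; linarith),
        ← ENNReal.ofReal_mul (exp_pos _).le, ← Real.exp_add]
      ring_nf
    rw [lintegral_congr_ae hcg, lintegral_const_mul _ hmg, my_gamma_exp hk hα hμ]
  have hQA : ℙ ({ω | U ω + X ω ≤ L ω}ᶜ)
      = ENNReal.ofReal ((1 - exp (-(μ * w))) / (μ * w) * (α / (α + μ)) ^ k) := by
    rw [hcompl, ← Measure.map_apply hTm hS, hmapT, Measure.prod_apply hS,
      lintegral_prod _ (measurable_measure_prodMk_left hS).aemeasurable]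
    have hme : Measurable fun u : ℝ => ENNReal.ofReal (exp (μ * u)) :=
      ((measurable_id.const_mul μ).exp).ennreal_ofReal
    have hae_u : ∀ᵐ u ∂νU, u ∈ Set.Ioo (-w) (0:ℝ) := by
      rw [hνU]
      exact Measure.ae_smul_measure (ae_restrict_mem measurableSet_Ioo) _
    rw [lintegral_congr_ae (hae_u.mono fun u hu => hinner u hu), hνU,
      lintegral_smul_measure, smul_eq_mul,
      lintegral_mul_const _ hme,
      my_unif_exp hμ hw, ← ENNReal.ofReal_inv_of_pos hw,
      ← ENNReal.ofReal_mul (div_nonneg (by linarith) hμ.le),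
      ← ENNReal.ofReal_mul (by positivity)]
    congr 1
    ring
  have hsum := measure_add_measure_compl (μ := (ℙ : Measure Ω)) hA
  rw [hQA, measure_univ] at hsum
  have hmain : ℙ {ω | U ω + X ω ≤ L ω}
      = 1 - ENNReal.ofReal ((1 - exp (-(μ * w))) / (μ * w) * (α / (α + μ)) ^ k) :=
    ENNReal.eq_sub_of_add_eq ENNReal.ofReal_ne_top hsum
  rw [hmain, ← ENNReal.ofReal_one, ← ENNReal.ofReal_sub _ hq0, neg_mul]
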